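/- Let s ∈ ℝ, p ∈ (0,∞), q ∈ (p,∞), and τ ∈ (0, 1/p - 1/q]. Define the sequence t = {t_Q} indexed by dyadic cubes of ℝⁿ by t_Q = |R_j|^{s/n + 1/2 + τ - 1/p} if Q = R_j := [0, 2^{-j})^n for some j ∈ ℤ, and t_Q = 0 otherwise. Then ‖t‖_{ḟ^{s,τ}_{p,q}} < ∞ while ‖t‖_{ḃ^{s,τ+1/q-1/p}_{q,q}} = ∞. -/

import Mathlib

open MeasureTheory ENNReal

/-- A dyadic cube `Q_{jk} = 2^{-j}([0,1)^n + k)` in `ℝⁿ`, recorded by its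
generation `j ∈ ℤ` and position `k ∈ ℤⁿ`. -/
structure DyadicCube (n : ℕ) where
  j : ℤ
  k : Fin n → ℤ

namespace DyadicCube

/-- The dyadic cube as a subset of `ℝⁿ`. -/
def toSet {n : ℕ} (Q : DyadicCube n) : Set (Fin n → ℝ) :=
  {x | ∀ i, (Q.k i : ℝ) * (2 : ℝ) ^ (-Q.j) ≤ x i ∧
        x i < ((Q.k i : ℝ) + 1) * (2 : ℝ) ^ (-Q.j)}

/-- The Lebesgue measure `|Q| = 2^{-jn}` of a dyadic cube, as an element of `ℝ≥0∞`. -/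
noncomputable def vol {n : ℕ} (Q : DyadicCube n) : ℝ≥0∞ :=
  (2 : ℝ≥0∞) ^ (-(Q.j : ℝ) * n)

/-- The characteristic function `χ_Q`, with values in `ℝ≥0∞`. -/
noncomputable def ind {n : ℕ} (Q : DyadicCube n) (x : Fin n → ℝ) : ℝ≥0∞ :=
  Q.toSet.indicator (fun _ => (1 : ℝ≥0∞)) x

end DyadicCube

open DyadicCube

/-- The coefficient `|Q|^{-s/n - 1/2}`. -/
noncomputable def coeff {n : ℕ} (s : ℝ) (Q : DyadicCube n) : ℝ≥0∞ :=
  Q.vol ^ (-(s / (n : ℝ)) - 1 / 2)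

/-- The `ℓ^q`-norm `(Σ_i a_i^q)^{1/q}` of a family of extended nonnegative reals,
with the usual modification (`sup`) when `q = ∞`. -/
noncomputable def lqSum {ι : Type*} (q : ℝ≥0∞) (a : ι → ℝ≥0∞) : ℝ≥0∞ :=
  if q = ∞ then ⨆ i, a i else (∑' i, a i ^ q.toReal) ^ (1 / q.toReal)

/-- The `L^p`-norm `(∫_A g^p dx)^{1/p}` over a set `A ⊆ ℝⁿ`, with the usual
modification (`sup` over `x ∈ A`) when `p = ∞`. -/
noncomputable def lpIntOn {n : ℕ} (p : ℝ≥0∞) (A : Set (Fin n → ℝ))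
    (g : (Fin n → ℝ) → ℝ≥0∞) : ℝ≥0∞ :=
  if p = ∞ then ⨆ x ∈ A, g x
  else (∫⁻ x in A, g x ^ p.toReal) ^ (1 / p.toReal)

/-- The Triebel–Lizorkin-type sequence norm
`‖t‖_{ḟ^{s,τ}_{p,q}} = sup_P |P|^{-τ} ( ∫_P ( Σ_{Q ⊆ P} [|Q|^{-s/n-1/2} |t_Q| χ_Q(x)]^q )^{p/q} dx )^{1/p}`,
with the usual modifications when `p = ∞` or `q = ∞`. -/
noncomputable def fNorm (n : ℕ) (s τ : ℝ) (p q : ℝ≥0∞) (t : DyadicCube n → ℂ) : ℝ≥0∞ :=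
  ⨆ P : DyadicCube n, P.vol ^ (-τ) *
    lpIntOn p P.toSet fun x =>
      lqSum q fun Q : {Q : DyadicCube n // Q.toSet ⊆ P.toSet} =>
        coeff s Q.1 * ‖t Q.1‖₊ * ind Q.1 x

/-- The Besov-type sequence norm
`‖t‖_{ḃ^{s,τ}_{p,q}} = sup_P |P|^{-τ} ( Σ_{j ≥ j_P} ( ∫_P [ Σ_{Q ⊆ P, ℓ(Q)=2^{-j}} |Q|^{-s/n-1/2} |t_Q| χ_Q(x) ]^p dx )^{q/p} )^{1/q}`,
with the usual modifications when `p = ∞` or `q = ∞`. -/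
noncomputable def bNorm (n : ℕ) (s τ : ℝ) (p q : ℝ≥0∞) (t : DyadicCube n → ℂ) : ℝ≥0∞ :=
  ⨆ P : DyadicCube n, P.vol ^ (-τ) *
    lqSum q fun j : {j : ℤ // P.j ≤ j} =>
      lpIntOn p P.toSet fun x =>
        ∑' Q : {Q : DyadicCube n // Q.toSet ⊆ P.toSet ∧ Q.j = j.1},
          coeff s Q.1 * ‖t Q.1‖₊ * ind Q.1 x

/-- The `ḟ^{σ}_{∞,∞} = ḃ^{σ}_{∞,∞}` sequence norm `sup_Q |Q|^{-σ/n - 1/2} |t_Q|`. -/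
noncomputable def supNorm (n : ℕ) (σ : ℝ) (t : DyadicCube n → ℂ) : ℝ≥0∞ :=
  ⨆ Q : DyadicCube n, coeff σ Q * ‖t Q‖₊

/-- The test sequence with `t_{R_j} = |R_j|^{s/n + 1/2 + τ - 1/p}` for
`R_j = [0,2^{-j})^n` (the dyadic cube with `k = 0`), and `t_Q = 0` otherwise. -/
noncomputable def testSeq (n : ℕ) (s τ p : ℝ) : DyadicCube n → ℂ := fun Q =>
  if Q.k = 0 then
    ((((2 : ℝ) ^ (-(Q.j : ℝ) * n)) ^ (s / n + 1 / 2 + τ - 1 / p) : ℝ) : ℂ)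
  else 0

/-- The cube `R_j = [0, 2^{-j})^n`. -/
def Rcube (n : ℕ) (j : ℤ) : DyadicCube n := ⟨j, 0⟩



instance dyadicCountable (n : ℕ) : Countable (DyadicCube n) :=
  Function.Injective.countable (f := fun Q : DyadicCube n => (Q.j, Q.k)) (by
    rintro ⟨a, b⟩ ⟨c, d⟩ h
    simp only [Prod.mk.injEq] at h
    simp [h.1, h.2])

lemma tp_ne_top (a : ℝ) : (2:ℝ≥0∞) ^ a ≠ ∞ := by
  simp [ENNReal.rpow_eq_top_iff]

lemma tp_ne_zero (a : ℝ) : (2:ℝ≥0∞) ^ a ≠ 0 := by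
  simp [ENNReal.rpow_eq_zero_iff]

lemma tp_add (a b : ℝ) : (2:ℝ≥0∞) ^ (a + b) = 2 ^ a * 2 ^ b :=
  ENNReal.rpow_add a b (by norm_num) (by norm_num)

lemma toSet_eq_pi {n : ℕ} (Q : DyadicCube n) :
    Q.toSet = Set.univ.pi fun i =>
      Set.Ico ((Q.k i : ℝ) * (2:ℝ) ^ (-Q.j)) (((Q.k i : ℝ) + 1) * (2:ℝ) ^ (-Q.j)) := by
  ext x; simp [DyadicCube.toSet, Set.mem_pi, Set.mem_Ico]

lemma measurableSet_toSet {n : ℕ} (Q : DyadicCube n) : MeasurableSet Q.toSet := by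
  rw [toSet_eq_pi]
  exact MeasurableSet.univ_pi fun i => measurableSet_Ico

lemma volume_toSet {n : ℕ} (Q : DyadicCube n) : volume Q.toSet = Q.vol := by
  rw [toSet_eq_pi, volume_pi_pi]
  have h1 : ∀ i : Fin n, volume (Set.Ico ((Q.k i : ℝ) * (2:ℝ) ^ (-Q.j))
      (((Q.k i : ℝ) + 1) * (2:ℝ) ^ (-Q.j))) = ENNReal.ofReal ((2:ℝ) ^ (-Q.j)) := by
    intro i
    rw [Real.volume_Ico]
    congr 1
    ring
  simp only [h1, Finset.prod_const, Finset.card_univ, Fintype.card_fin]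
  have h2 : ((2:ℝ) ^ (-Q.j) : ℝ) = (2:ℝ) ^ ((-Q.j : ℤ) : ℝ) := by
    rw [Real.rpow_intCast]
  rw [h2, ← ENNReal.ofReal_rpow_of_pos two_pos]
  have : ENNReal.ofReal (2:ℝ) = 2 := by norm_num
  rw [this, DyadicCube.vol, ← ENNReal.rpow_natCast (2 ^ _) n, ← ENNReal.rpow_mul]
  congr 1
  push_cast
  ring

lemma ind_mul_rpow {n : ℕ} (Q : DyadicCube n) (x : Fin n → ℝ) (c : ℝ≥0∞) {r : ℝ}
    (hr : 0 < r) : (c * Q.ind x) ^ r = c ^ r * Q.ind x := by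
  unfold DyadicCube.ind
  by_cases hx : x ∈ Q.toSet
  · simp [Set.indicator_of_mem hx]
  · simp [Set.indicator_of_notMem hx, ENNReal.zero_rpow_of_pos hr]

lemma measurable_ind {n : ℕ} (Q : DyadicCube n) : Measurable Q.ind := by
  unfold DyadicCube.ind
  exact measurable_const.indicator (measurableSet_toSet Q)

lemma lintegral_ind_le {n : ℕ} (Q : DyadicCube n) (A : Set (Fin n → ℝ)) :
    ∫⁻ x in A, Q.ind x ≤ Q.vol := by
  unfold DyadicCube.ind
  rw [lintegral_indicator_const (measurableSet_toSet Q),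
    Measure.restrict_apply (measurableSet_toSet Q), one_mul]
  exact le_trans (measure_mono Set.inter_subset_left) (le_of_eq (volume_toSet Q))

lemma lintegral_ind_eq {n : ℕ} (Q : DyadicCube n) (A : Set (Fin n → ℝ))
    (h : Q.toSet ⊆ A) : ∫⁻ x in A, Q.ind x = Q.vol := by
  unfold DyadicCube.ind
  rw [lintegral_indicator_const (measurableSet_toSet Q),
    Measure.restrict_apply (measurableSet_toSet Q), one_mul,
    Set.inter_eq_left.2 h, volume_toSet]

lemma coeff_norm (n : ℕ) (s τ p : ℝ) (j : ℤ) :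
    coeff s (Rcube n j) * (‖testSeq n s τ p (Rcube n j)‖₊ : ℝ≥0∞) =
      (2:ℝ≥0∞) ^ ((j:ℝ) * n * (1/p - τ)) := by
  have hb : (0:ℝ) < (2:ℝ) ^ (-(j:ℝ) * n) := Real.rpow_pos_of_pos two_pos _
  have hval : testSeq n s τ p (Rcube n j) =
      ((((2 : ℝ) ^ (-(j:ℝ) * n)) ^ (s / n + 1 / 2 + τ - 1 / p) : ℝ) : ℂ) := if_pos rfl
  rw [hval, Complex.nnnorm_real, ← enorm_eq_nnnorm, Real.enorm_eq_ofReal (Real.rpow_nonneg hb.le _),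
    ← ENNReal.ofReal_rpow_of_pos hb, ← ENNReal.ofReal_rpow_of_pos two_pos]
  have h2 : ENNReal.ofReal (2:ℝ) = 2 := by norm_num
  rw [h2]
  simp only [coeff, DyadicCube.vol, Rcube]
  rw [← ENNReal.rpow_mul, ← ENNReal.rpow_mul, ← tp_add]
  congr 1
  ring

lemma mem_R {n : ℕ} (j : ℤ) (x : Fin n → ℝ) :
    x ∈ (Rcube n j).toSet ↔ ∀ i, 0 ≤ x i ∧ x i < (2:ℝ) ^ (-j) := by
  simp [Rcube, DyadicCube.toSet]

lemma Rcube_subset (n : ℕ) {j₀ j : ℤ} (h : j₀ ≤ j) :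
    (Rcube n j).toSet ⊆ (Rcube n j₀).toSet := by
  intro x hx
  rw [mem_R] at *
  intro i
  exact ⟨(hx i).1, lt_of_lt_of_le (hx i).2 (zpow_le_zpow_right₀ one_le_two (by omega))⟩

lemma subset_structure {n : ℕ} (hn : 0 < n) {Q P : DyadicCube n}
    (hk : Q.k = 0) (hQP : Q.toSet ⊆ P.toSet) : P.k = 0 ∧ P.j ≤ Q.j := by
  have hc : ∀ m : ℤ, (0:ℝ) < (2:ℝ) ^ (-m) := fun m => zpow_pos two_pos _
  have hQ0 : (0 : Fin n → ℝ) ∈ Q.toSet := by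
    intro i
    simp only [hk, Pi.zero_apply, Int.cast_zero, zero_mul, zero_add, one_mul]
    exact ⟨le_refl _, hc Q.j⟩
  have hP0 := hQP hQ0
  have hPk : P.k = 0 := by
    funext i
    have h1 := (hP0 i).1
    have h2 := (hP0 i).2
    simp only [Pi.zero_apply] at h1 h2 ⊢
    have ha : (P.k i : ℝ) ≤ 0 := by
      have h1' : (P.k i : ℝ) * (2:ℝ) ^ (-P.j) ≤ 0 * (2:ℝ) ^ (-P.j) := by
        simpa using h1
      exact le_of_mul_le_mul_right h1' (hc P.j)
    have hb : (0:ℝ) < (P.k i : ℝ) + 1 := by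
      have h2' : 0 * (2:ℝ) ^ (-P.j) < ((P.k i : ℝ) + 1) * (2:ℝ) ^ (-P.j) := by
        simpa using h2
      exact lt_of_mul_lt_mul_right h2' (hc P.j).le
    have ha' : (P.k i : ℤ) ≤ 0 := by exact_mod_cast ha
    have hb' : (0:ℤ) < P.k i + 1 := by exact_mod_cast hb
    omega
  refine ⟨hPk, ?_⟩
  by_contra hlt
  push_neg at hlt
  have hx : (fun _ => (2:ℝ) ^ (-P.j) : Fin n → ℝ) ∈ Q.toSet := by
    intro i
    simp only [hk, Pi.zero_apply, Int.cast_zero, zero_mul, zero_add, one_mul]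
    exact ⟨(hc P.j).le, zpow_lt_zpow_right₀ one_lt_two (by omega)⟩
  have h2 := (hQP hx ⟨0, hn⟩).2
  rw [congrFun hPk ⟨0, hn⟩] at h2
  simp only [Pi.zero_apply, Int.cast_zero, zero_add, one_mul] at h2
  exact lt_irrefl _ h2

lemma tsum_subtype_R {n : ℕ} (hn : 0 < n) (j₀ : ℤ) (c : DyadicCube n → ℝ≥0∞)
    (hc : ∀ Q : DyadicCube n, Q.k ≠ 0 → c Q = 0) :
    ∑' Q : {Q : DyadicCube n // Q.toSet ⊆ (Rcube n j₀).toSet}, c Q.1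
      = ∑' j : {j : ℤ // j₀ ≤ j}, c (Rcube n j.1) := by
  symm
  refine Function.Injective.tsum_eq
    (g := fun j : {j : ℤ // j₀ ≤ j} =>
      (⟨Rcube n j.1, Rcube_subset n j.2⟩ : {Q : DyadicCube n // Q.toSet ⊆ (Rcube n j₀).toSet}))
    (f := fun Q : {Q : DyadicCube n // Q.toSet ⊆ (Rcube n j₀).toSet} => c Q.1) ?_ ?_
  · intro a b h
    have : a.1 = b.1 := congrArg DyadicCube.j (congrArg Subtype.val h)
    exact Subtype.ext this
  · rintro ⟨⟨j, k⟩, hsub⟩ hQ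
    have hk : k = 0 := by
      by_contra hk
      exact hQ (hc _ hk)
    obtain ⟨hPk, hj⟩ := subset_structure hn (show (⟨j, k⟩ : DyadicCube n).k = 0 from hk) hsub
    exact ⟨⟨j, hj⟩, Subtype.ext (by show Rcube n j = ⟨j, k⟩; rw [Rcube, hk])⟩

def nat_equiv (j₀ : ℤ) : ℕ ≃ {j : ℤ // j₀ ≤ j} where
  toFun m := ⟨j₀ + m, by omega⟩
  invFun j := (j.1 - j₀).toNat
  left_inv m := by simp
  right_inv j := by
    apply Subtype.ext
    have := j.2
    simp only
    omega

lemma tsum_tp (j₀ : ℤ) {c : ℝ} (hc : 0 < c) :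
    ∑' j : {j : ℤ // j₀ ≤ j}, (2:ℝ≥0∞) ^ (-(j.1:ℝ) * c) =
      (2:ℝ≥0∞) ^ (-(j₀:ℝ) * c) * (1 - (2:ℝ≥0∞) ^ (-c))⁻¹ := by
  rw [← (nat_equiv j₀).tsum_eq]
  have key : ∀ m : ℕ, (2:ℝ≥0∞) ^ (-(((nat_equiv j₀) m).1 : ℝ) * c) =
      (2:ℝ≥0∞) ^ (-(j₀:ℝ) * c) * ((2:ℝ≥0∞) ^ (-c)) ^ m := by
    intro m
    have h1 : ((nat_equiv j₀) m).1 = j₀ + m := rfl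
    rw [h1, ← ENNReal.rpow_natCast ((2:ℝ≥0∞) ^ (-c)) m, ← ENNReal.rpow_mul, ← tp_add]
    congr 1
    push_cast
    ring
  simp only [key]
  rw [ENNReal.tsum_mul_left, ENNReal.tsum_geometric]

lemma geom_ne_top {c : ℝ} (hc : 0 < c) : (1 - (2:ℝ≥0∞) ^ (-c))⁻¹ ≠ ∞ := by
  rw [ENNReal.inv_ne_top]
  have : (2:ℝ≥0∞) ^ (-c) < 1 :=
    ENNReal.rpow_lt_one_of_one_lt_of_neg one_lt_two (by linarith)
  exact (tsub_pos_of_lt this).ne'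

instance : Infinite {j : ℤ // (0:ℤ) ≤ j} :=
  Infinite.of_injective (fun m : ℕ => ⟨(m:ℤ), Int.ofNat_nonneg m⟩) (by
    intro a b h
    simpa [Subtype.ext_iff] using h)

lemma finset_sum_rpow_le {ι : Type*} (s : Finset ι) (c : ι → ℝ≥0∞) {r : ℝ} (hr : 1 ≤ r) :
    ∑ i ∈ s, c i ^ r ≤ (∑ i ∈ s, c i) ^ r := by
  induction s using Finset.cons_induction with
  | empty => simp [ENNReal.zero_rpow_of_pos (lt_of_lt_of_le one_pos hr)]
  | cons a s ha ih =>
    simp only [Finset.sum_cons]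
    calc c a ^ r + ∑ i ∈ s, c i ^ r ≤ c a ^ r + (∑ i ∈ s, c i) ^ r := by
          exact add_le_add_right ih _
      _ ≤ (c a + ∑ i ∈ s, c i) ^ r := ENNReal.add_rpow_le_rpow_add _ _ hr

lemma tsum_rpow_le {ι : Type*} (b : ι → ℝ≥0∞) {θ : ℝ} (hθ0 : 0 < θ) (hθ1 : θ ≤ 1) :
    (∑' i, b i) ^ θ ≤ ∑' i, b i ^ θ := by
  have hr : 1 ≤ 1/θ := by
    rw [le_div_iff₀ hθ0]; linarith
  have key : ∑' i, b i ≤ (∑' i, b i ^ θ) ^ (1/θ) := by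
    rw [ENNReal.tsum_eq_iSup_sum]
    refine iSup_le fun s => ?_
    calc ∑ i ∈ s, b i = ∑ i ∈ s, (b i ^ θ) ^ (1/θ) := by
          refine Finset.sum_congr rfl fun i _ => ?_
          rw [← ENNReal.rpow_mul, mul_one_div_cancel hθ0.ne', ENNReal.rpow_one]
      _ ≤ (∑ i ∈ s, b i ^ θ) ^ (1/θ) := finset_sum_rpow_le _ _ hr
      _ ≤ (∑' i, b i ^ θ) ^ (1/θ) :=
          ENNReal.rpow_le_rpow (Summable.sum_le_tsum s (fun i _ => zero_le) ENNReal.summable)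
            (by positivity)
  calc (∑' i, b i) ^ θ ≤ ((∑' i, b i ^ θ) ^ (1/θ)) ^ θ := ENNReal.rpow_le_rpow key hθ0.le
    _ = ∑' i, b i ^ θ := by
        rw [← ENNReal.rpow_mul, one_div_mul_cancel hθ0.ne', ENNReal.rpow_one]

/-- for `s ∈ ℝ`, `p ∈ (0,∞)`, `q ∈ (p,∞)`, `τ ∈ (0, 1/p - 1/q]`, the
sequence `t` with `t_{R_j} = |R_j|^{s/n+1/2+τ-1/p}` (`R_j = [0,2^{-j})^n`) and `t_Q = 0`
otherwise satisfies `‖t‖_{ḟ^{s,τ}_{p,q}} < ∞` but `‖t‖_{ḃ^{s,τ+1/q-1/p}_{q,q}} = ∞`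
(the latter norm, having equal integrability indices, is given by the
`∫_P Σ_{Q⊆P}` formula). -/
theorem stmt3 (n : ℕ) (hn : 0 < n) (s p q τ : ℝ)
    (hp : 0 < p) (hpq : p < q) (hτ : 0 < τ) (hτ' : τ ≤ 1 / p - 1 / q) :
    fNorm n s τ (ENNReal.ofReal p) (ENNReal.ofReal q) (testSeq n s τ p) ≠ ∞ ∧
    fNorm n s (τ + 1 / q - 1 / p) (ENNReal.ofReal q) (ENNReal.ofReal q)
      (testSeq n s τ p) = ∞ := by
  have hq : 0 < q := hp.trans hpq
  have hqinv : (0:ℝ) < 1/q := by positivity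
  have hA : 0 < 1/p - τ := by linarith
  have hnR : (0:ℝ) < n := by exact_mod_cast hn
  constructor
  · -- Part 1 : finiteness of the f-norm
    have hc : 0 < (n:ℝ) * p * τ := by positivity
    set C : ℝ≥0∞ := (1 - (2:ℝ≥0∞) ^ (-((n:ℝ) * p * τ)))⁻¹ with hC
    have hCtop : C ≠ ∞ := geom_ne_top hc
    have hKtop : C ^ (1/p) < ∞ := ENNReal.rpow_lt_top_of_nonneg (by positivity) hCtop
    refine ne_of_lt (lt_of_le_of_lt (iSup_le fun P => ?_) hKtop)
    rw [lpIntOn, if_neg ENNReal.ofReal_ne_top, ENNReal.toReal_ofReal hp.le]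
    simp only [lqSum, if_neg ENNReal.ofReal_ne_top, ENNReal.toReal_ofReal hq.le]
    by_cases hPk : P.k = 0
    · -- P = Rcube n P.j
      have hPR : P = Rcube n P.j := by
        cases P
        simp only at hPk
        simp [Rcube, hPk]
      rw [hPR]
      set j₀ := P.j with hj₀
      have hθ0 : (0:ℝ) < 1/q * p := by positivity
      have hθ1 : (1/q) * p ≤ 1 := by
        rw [one_div, inv_mul_le_iff₀ hq, mul_one]
        exact hpq.le
      have hpt : ∀ x : Fin n → ℝ,
          ((∑' Q : {Q : DyadicCube n // Q.toSet ⊆ (Rcube n j₀).toSet},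
            (coeff s Q.1 * (‖testSeq n s τ p Q.1‖₊ : ℝ≥0∞) * ind Q.1 x) ^ q) ^ (1/q)) ^ p
          ≤ ∑' j : {j : ℤ // j₀ ≤ j},
              (2:ℝ≥0∞) ^ ((j.1:ℝ) * n * (1/p - τ) * p) * ind (Rcube n j.1) x := by
        intro x
        rw [← ENNReal.rpow_mul]
        refine le_trans (tsum_rpow_le _ hθ0 hθ1) (le_of_eq ?_)
        have e1 : ∀ Q : {Q : DyadicCube n // Q.toSet ⊆ (Rcube n j₀).toSet},
            ((coeff s Q.1 * (‖testSeq n s τ p Q.1‖₊ : ℝ≥0∞) * ind Q.1 x) ^ q) ^ ((1/q)*p)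
            = (coeff s Q.1 * (‖testSeq n s τ p Q.1‖₊ : ℝ≥0∞) * ind Q.1 x) ^ p := by
          intro Q
          rw [← ENNReal.rpow_mul]
          congr 1
          field_simp
        rw [tsum_congr e1,
          tsum_subtype_R hn j₀
            (fun Q => (coeff s Q * (‖testSeq n s τ p Q‖₊ : ℝ≥0∞) * ind Q x) ^ p)
            (fun Q hQk => by
              simp only [testSeq, if_neg hQk]
              simp [ENNReal.zero_rpow_of_pos hp])]
        refine tsum_congr fun j => ?_
        rw [coeff_norm, ind_mul_rpow _ _ _ hp, ← ENNReal.rpow_mul]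
      have hint : (∫⁻ x in (Rcube n j₀).toSet,
          ((∑' Q : {Q : DyadicCube n // Q.toSet ⊆ (Rcube n j₀).toSet},
            (coeff s Q.1 * (‖testSeq n s τ p Q.1‖₊ : ℝ≥0∞) * ind Q.1 x) ^ q) ^ (1/q)) ^ p)
          ≤ (2:ℝ≥0∞) ^ (-(j₀:ℝ) * ((n:ℝ)*p*τ)) * C := by
        refine le_trans (lintegral_mono hpt) ?_
        rw [lintegral_tsum (fun j => ((measurable_ind _).const_mul _).aemeasurable)]
        have e2 : ∀ j : {j : ℤ // j₀ ≤ j},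
            (∫⁻ x in (Rcube n j₀).toSet,
              (2:ℝ≥0∞) ^ ((j.1:ℝ) * n * (1/p - τ) * p) * ind (Rcube n j.1) x)
            ≤ (2:ℝ≥0∞) ^ (-(j.1:ℝ) * ((n:ℝ)*p*τ)) := by
          intro j
          rw [lintegral_const_mul _ (measurable_ind _)]
          refine le_trans (mul_le_mul_right (lintegral_ind_le _ _) _) (le_of_eq ?_)
          simp only [DyadicCube.vol, Rcube]
          rw [← tp_add]
          congr 1
          field_simp
          ring
        exact le_trans (ENNReal.tsum_le_tsum e2) (le_of_eq (tsum_tp j₀ hc))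
      refine le_trans (mul_le_mul_right
        (ENNReal.rpow_le_rpow hint (by positivity : (0:ℝ) ≤ 1/p)) _) (le_of_eq ?_)
      rw [ENNReal.mul_rpow_of_nonneg _ _ (by positivity : (0:ℝ) ≤ 1/p)]
      simp only [DyadicCube.vol, Rcube]
      rw [← ENNReal.rpow_mul, ← ENNReal.rpow_mul, ← mul_assoc, ← tp_add]
      have hexp : -(j₀:ℝ) * n * -τ + -(j₀:ℝ) * ((n:ℝ)*p*τ) * (1/p) = 0 := by
        field_simp
        ring
      rw [hexp, ENNReal.rpow_zero, one_mul]
    · -- P.k ≠ 0 : all coefficients vanish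
      have hzero : ∀ x : Fin n → ℝ, (∑' Q : {Q : DyadicCube n // Q.toSet ⊆ P.toSet},
          (coeff s Q.1 * (‖testSeq n s τ p Q.1‖₊ : ℝ≥0∞) * ind Q.1 x) ^ q) = 0 := by
        intro x
        rw [ENNReal.tsum_eq_zero]
        intro Q
        have hQk : Q.1.k ≠ 0 := fun h => hPk (subset_structure hn h Q.2).1
        simp only [testSeq, if_neg hQk]
        simp [ENNReal.zero_rpow_of_pos hq]
      simp only [hzero, ENNReal.zero_rpow_of_pos hqinv, ENNReal.zero_rpow_of_pos hp,
        lintegral_zero, ENNReal.zero_rpow_of_pos (by positivity : (0:ℝ) < 1/p), mul_zero]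
      exact zero_le
  · -- Part 2
    rw [eq_top_iff]
    refine le_trans ?_ (le_iSup _ (Rcube n 0))
    rw [lpIntOn, if_neg ENNReal.ofReal_ne_top, ENNReal.toReal_ofReal hq.le]
    simp only [lqSum, if_neg ENNReal.ofReal_ne_top, ENNReal.toReal_ofReal hq.le]
    have hδ : 0 ≤ (n:ℝ) * (q * (1/p - τ) - 1) := by
      have h1 : 1/q ≤ 1/p - τ := by linarith
      have h2 : q * (1/q) = 1 := mul_one_div_cancel hq.ne'
      have h3 := mul_le_mul_of_nonneg_left h1 hq.le
      rw [h2] at h3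
      exact mul_nonneg hnR.le (by linarith)
    have hvol : (Rcube n 0).vol = 1 := by
      simp [DyadicCube.vol, Rcube]
    have hpt : ∀ x : Fin n → ℝ,
        ((∑' Q : {Q : DyadicCube n // Q.toSet ⊆ (Rcube n 0).toSet},
          (coeff s Q.1 * (‖testSeq n s τ p Q.1‖₊ : ℝ≥0∞) * ind Q.1 x) ^ q) ^ (1/q)) ^ q
        = ∑' j : {j : ℤ // (0:ℤ) ≤ j},
            (2:ℝ≥0∞) ^ ((j.1:ℝ) * n * (1/p - τ) * q) * ind (Rcube n j.1) x := by
      intro x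
      rw [← ENNReal.rpow_mul, one_div_mul_cancel hq.ne', ENNReal.rpow_one,
        tsum_subtype_R hn 0
          (fun Q => (coeff s Q * (‖testSeq n s τ p Q‖₊ : ℝ≥0∞) * ind Q x) ^ q)
          (fun Q hQk => by
            simp only [testSeq, if_neg hQk]
            simp [ENNReal.zero_rpow_of_pos hq])]
      refine tsum_congr fun j => ?_
      rw [coeff_norm, ind_mul_rpow _ _ _ hq, ← ENNReal.rpow_mul]
    have hint : (∫⁻ x in (Rcube n 0).toSet,
        ((∑' Q : {Q : DyadicCube n // Q.toSet ⊆ (Rcube n 0).toSet},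
          (coeff s Q.1 * (‖testSeq n s τ p Q.1‖₊ : ℝ≥0∞) * ind Q.1 x) ^ q) ^ (1/q)) ^ q)
        = ⊤ := by
      rw [lintegral_congr hpt,
        lintegral_tsum (fun j => ((measurable_ind _).const_mul _).aemeasurable),
        eq_top_iff]
      refine le_trans (le_of_eq (ENNReal.tsum_const_eq_top_of_ne_zero one_ne_zero).symm)
        (ENNReal.tsum_le_tsum fun j => ?_)
      rw [lintegral_const_mul _ (measurable_ind _),
        lintegral_ind_eq _ _ (Rcube_subset n j.2)]
      have he : (2:ℝ≥0∞) ^ ((j.1:ℝ) * n * (1/p - τ) * q) * (Rcube n j.1).vol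
          = (2:ℝ≥0∞) ^ ((j.1:ℝ) * ((n:ℝ) * (q * (1/p - τ) - 1))) := by
        simp only [DyadicCube.vol, Rcube]
        rw [← tp_add]
        congr 1
        ring
      rw [he]
      calc (1:ℝ≥0∞) = 2 ^ (0:ℝ) := by rw [ENNReal.rpow_zero]
        _ ≤ _ := ENNReal.rpow_le_rpow_of_exponent_le one_le_two
            (mul_nonneg (by exact_mod_cast j.2) hδ)
    rw [hint, hvol, ENNReal.one_rpow, one_mul,
      ENNReal.top_rpow_of_pos hqinv]
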